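/- Let σ > 1 and r₀ > 0. Let A : (r₀, ∞) → ℝ be continuously differentiable with A > 0 on (r₀, ∞) and ∫_{r₀}^{∞} dr/A(r) < ∞, and set γ(r) = ∫_{r}^{∞} dξ/A(ξ) for r ≥ r₀. Let B : (r₀, ∞) → ℝ be continuous with ∫_{r₀}^{∞} γ(r)^{σ} |B(r)| dr < ∞. Then there exist R₀ > r₀ and a differentiable function y : (R₀, ∞) → ℝ such that y(r) > 0 for all r > R₀, the function r ↦ A(r) y'(r) is differentiable on (R₀, ∞) with (A y')'(r) + B(r) y(r)^{σ} = 0 for every r > R₀, and y(r)/γ(r) → 1 as r → ∞. -/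

import Mathlib

open MeasureTheory Real RealInnerProductSpace Classical ENNReal

section OdeAuxHelpers

lemma int_Ioi_eq {G : ℝ → ℝ} (hG : Integrable G) (r : ℝ) :
    ∫ x in Set.Ioi r, G x = (∫ x, G x) - ∫ x in Set.Iic r, G x := by
  have h := integral_add_compl (measurableSet_Iic (a := r)) hG
  rw [Set.compl_Iic] at h
  linarith

lemma int_Iic_eq {G : ℝ → ℝ} (hG : Integrable G) (r : ℝ) :
    ∫ x in Set.Iic r, G x = (∫ x in Set.Iic (0:ℝ), G x) + ∫ x in (0:ℝ)..r, G x := by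
  rw [← intervalIntegral.integral_Iic_sub_Iic hG.integrableOn hG.integrableOn]
  ring

lemma cont_int_Ioi {G : ℝ → ℝ} (hG : Integrable G) :
    Continuous fun r => ∫ x in Set.Ioi r, G x := by
  have h : (fun r => ∫ x in Set.Ioi r, G x)
      = fun r => (∫ x, G x) - ((∫ x in Set.Iic (0:ℝ), G x) + ∫ x in (0:ℝ)..r, G x) := by
    funext r; rw [int_Ioi_eq hG, int_Iic_eq hG]
  rw [h]
  exact continuous_const.sub (continuous_const.add
    (intervalIntegral.continuous_primitive (fun a b => hG.intervalIntegrable) 0))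

lemma hasDerivAt_int_Ioi {G : ℝ → ℝ} (hG : Integrable G) {r : ℝ} (hc : ContinuousAt G r) :
    HasDerivAt (fun x => ∫ t in Set.Ioi x, G t) (-G r) r := by
  have key : HasDerivAt (fun u => ∫ t in (0:ℝ)..u, G t) (G r) r :=
    intervalIntegral.integral_hasDerivAt_right hG.intervalIntegrable
      ⟨Set.univ, Filter.univ_mem, hG.aestronglyMeasurable.restrict⟩ hc
  have heq : (fun x => ∫ t in Set.Ioi x, G t)
      = fun x => ((∫ x, G x) - ∫ x in Set.Iic (0:ℝ), G x) - ∫ t in (0:ℝ)..x, G t := by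
    funext x; rw [int_Ioi_eq hG, int_Iic_eq hG]; ring
  rw [heq]
  simpa using (key.const_sub _)

lemma tendsto_int_Ioi {G : ℝ → ℝ} (hG : Integrable G) :
    Filter.Tendsto (fun r => ∫ x in Set.Ioi r, G x) Filter.atTop (nhds 0) := by
  have h1 : Filter.Tendsto (fun r : ℝ => ∫ x in Set.Iic r, G x) Filter.atTop
      (nhds (∫ x in ⋃ r : ℝ, Set.Iic r, G x)) :=
    tendsto_setIntegral_of_monotone (fun r => measurableSet_Iic)
      (fun a b hab => Set.Iic_subset_Iic.2 hab)
      (by rw [Set.iUnion_Iic]; exact hG.integrableOn)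
  rw [Set.iUnion_Iic] at h1
  have h : (fun r => ∫ x in Set.Ioi r, G x)
      = fun r => (∫ x, G x) - ∫ x in Set.Iic r, G x := funext (int_Ioi_eq hG)
  rw [h]
  have h2 := (tendsto_const_nhds (x := ∫ x, G x)).sub h1
  simpa using h2

lemma abs_rpow_sub_rpow_le {σ : ℝ} (hσ : 1 ≤ σ) {a b c : ℝ}
    (ha : a ∈ Set.Icc (0:ℝ) c) (hb : b ∈ Set.Icc (0:ℝ) c) :
    |a ^ σ - b ^ σ| ≤ σ * c ^ (σ - 1) * |a - b| := by
  have hσ0 : (0:ℝ) ≤ σ := le_trans zero_le_one hσ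
  have bound : ∀ x ∈ Set.Icc (0:ℝ) c, ‖σ * x ^ (σ - 1)‖ ≤ σ * c ^ (σ - 1) := by
    intro x hx
    rw [Real.norm_eq_abs, abs_of_nonneg (mul_nonneg hσ0 (Real.rpow_nonneg hx.1 _))]
    exact mul_le_mul_of_nonneg_left (Real.rpow_le_rpow hx.1 hx.2 (by linarith)) hσ0
  have key := Convex.norm_image_sub_le_of_norm_hasDerivWithin_le
    (f := fun x : ℝ => x ^ σ) (f' := fun x : ℝ => σ * x ^ (σ - 1))
    (fun x _ => (Real.hasDerivAt_rpow_const (Or.inr hσ)).hasDerivWithinAt)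
    bound (convex_Icc 0 c) hb ha
  simpa [Real.norm_eq_abs] using key

end OdeAuxHelpers

set_option maxHeartbeats 1600000 in
/-- Proposition 5.1: existence of a positive solution `y` of `(A y')' + B y^σ = 0` on a
neighbourhood of infinity, asymptotic to `γ(r) = ∫_r^∞ dξ/A(ξ)`. -/
theorem ode_positive_solution
    (σ r₀ : ℝ) (hσ : 1 < σ) (hr₀ : 0 < r₀)
    (A : ℝ → ℝ) (hA_diff : ContDiffOn ℝ 1 A (Set.Ioi r₀))
    (hA_pos : ∀ r ∈ Set.Ioi r₀, 0 < A r)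
    (hA_int : IntegrableOn (fun r => 1 / A r) (Set.Ioi r₀))
    (γ : ℝ → ℝ) (hγ : ∀ r, r₀ ≤ r → γ r = ∫ ξ in Set.Ioi r, 1 / A ξ)
    (B : ℝ → ℝ) (hB_cont : ContinuousOn B (Set.Ioi r₀))
    (hB_int : IntegrableOn (fun r => γ r ^ σ * |B r|) (Set.Ioi r₀)) :
    ∃ R₀ : ℝ, r₀ < R₀ ∧ ∃ y y' Ay'' : ℝ → ℝ,
      (∀ r ∈ Set.Ioi R₀, 0 < y r) ∧
      (∀ r ∈ Set.Ioi R₀, HasDerivAt y (y' r) r) ∧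
      (∀ r ∈ Set.Ioi R₀, HasDerivAt (fun s => A s * y' s) (Ay'' r) r) ∧
      (∀ r ∈ Set.Ioi R₀, Ay'' r + B r * y r ^ σ = 0) ∧
      Filter.Tendsto (fun r => y r / γ r) Filter.atTop (nhds 1) := by
  classical
  have hσ0 : (0:ℝ) < σ := lt_trans one_pos hσ
  have hσ0' : (0:ℝ) ≤ σ := hσ0.le
  have hA_cont : ContinuousOn A (Set.Ioi r₀) := hA_diff.continuousOn
  have hA_ne : ∀ x ∈ Set.Ioi r₀, A x ≠ 0 := fun x hx => (hA_pos x hx).ne'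
  have hinvA_cont : ContinuousOn (fun x => 1 / A x) (Set.Ioi r₀) :=
    continuousOn_const.div hA_cont hA_ne
  set fA : ℝ → ℝ := (Set.Ioi r₀).indicator (fun x => 1 / A x) with hfA_def
  have hfA_int : Integrable fA := (integrable_indicator_iff measurableSet_Ioi).2 hA_int
  have hfA_nonneg : ∀ x, 0 ≤ fA x := by
    intro x
    by_cases hx : x ∈ Set.Ioi r₀
    · rw [hfA_def, Set.indicator_of_mem hx]
      exact le_of_lt (div_pos one_pos (hA_pos x hx))
    · rw [hfA_def, Set.indicator_of_notMem hx]
  set gg : ℝ → ℝ := fun r => ∫ x in Set.Ioi r, fA x with hgg_def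
  have hgg_cont : Continuous gg := cont_int_Ioi hfA_int
  have hgg_eq : ∀ r, r₀ ≤ r → γ r = gg r := by
    intro r hr
    rw [hγ r hr]
    have hEq : ∀ x ∈ Set.Ioi r, 1 / A x = fA x := fun x hx => by
      rw [hfA_def]
      exact (Set.indicator_of_mem (Set.mem_Ioi.mpr (lt_of_le_of_lt hr hx))
        (fun x => 1 / A x)).symm
    rw [hgg_def]
    exact setIntegral_congr_fun measurableSet_Ioi hEq
  have hgg_pos : ∀ r, r₀ ≤ r → 0 < gg r := by
    intro r hr
    have hsup : Set.Ioi r ⊆ Function.support fA ∩ Set.Ioi r := by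
      intro x hx
      have hx' : x ∈ Set.Ioi r₀ := lt_of_le_of_lt hr hx
      refine ⟨?_, hx⟩
      simp only [Function.mem_support, hfA_def, Set.indicator_of_mem hx']
      exact ne_of_gt (div_pos one_pos (hA_pos x hx'))
    rw [hgg_def]
    rw [setIntegral_pos_iff_support_of_nonneg_ae (ae_of_all _ hfA_nonneg) hfA_int.integrableOn]
    refine lt_of_lt_of_le ?_ (measure_mono hsup)
    rw [Real.volume_Ioi]
    exact ENNReal.zero_lt_top
  have hgg_ne : ∀ r, r₀ ≤ r → gg r ≠ 0 := fun r hr => (hgg_pos r hr).ne'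
  have hgg_deriv : ∀ r, r₀ < r → HasDerivAt gg (-(1 / A r)) r := by
    intro r hr
    have hmem : Set.Ioi r₀ ∈ nhds r := Ioi_mem_nhds hr
    have hceq : fA =ᶠ[nhds r] fun x => 1 / A x := by
      filter_upwards [hmem] with x hx
      exact Set.indicator_of_mem hx _
    have hc : ContinuousAt fA r := (hinvA_cont.continuousAt hmem).congr hceq.symm
    have h := hasDerivAt_int_Ioi hfA_int hc
    rw [show fA r = 1 / A r from Set.indicator_of_mem hr _] at h
    exact h
  -- the weight function
  set hfull : ℝ → ℝ := (Set.Ioi r₀).indicator (fun t => γ t ^ σ * |B t|) with hhfull_def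
  have hhfull_int : Integrable hfull := (integrable_indicator_iff measurableSet_Ioi).2 hB_int
  have hhfull_nonneg : ∀ x, 0 ≤ hfull x := by
    intro x
    by_cases hx : x ∈ Set.Ioi r₀
    · rw [hhfull_def, Set.indicator_of_mem hx]
      have h0 : (0:ℝ) ≤ γ x := by
        rw [hgg_eq x (le_of_lt hx)]; exact (hgg_pos x (le_of_lt hx)).le
      exact mul_nonneg (Real.rpow_nonneg h0 σ) (abs_nonneg _)
    · rw [hhfull_def, Set.indicator_of_notMem hx]
  set φ : ℝ → ℝ := fun r => ∫ x in Set.Ioi r, hfull x with hφ_def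
  have hφ_tendsto : Filter.Tendsto φ Filter.atTop (nhds 0) := tendsto_int_Ioi hhfull_int
  have hφ_nonneg : ∀ r, 0 ≤ φ r := fun r =>
    setIntegral_nonneg measurableSet_Ioi (fun x _ => hhfull_nonneg x)
  have hφ_anti : Antitone φ := by
    intro a b hab
    exact setIntegral_mono_set hhfull_int.integrableOn (ae_of_all _ hhfull_nonneg)
      (HasSubset.Subset.eventuallyLE (Set.Ioi_subset_Ioi hab))
  have h2σpos : (0:ℝ) < 2 ^ σ := Real.rpow_pos_of_pos two_pos σ
  have h2σ1pos : (0:ℝ) < 2 ^ (σ - 1) := Real.rpow_pos_of_pos two_pos _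
  set δ : ℝ := min (1 / (2 * 2 ^ σ)) (1 / (2 * (σ * 2 ^ (σ - 1)))) with hδ_def
  have hδpos : 0 < δ := lt_min (by positivity) (by positivity)
  obtain ⟨R₀, hR₀gt, hR₀small⟩ : ∃ R₀, r₀ < R₀ ∧ φ R₀ ≤ δ := by
    have h1 : ∀ᶠ r in Filter.atTop, φ r < δ := hφ_tendsto.eventually_lt_const hδpos
    obtain ⟨R₀, h⟩ := ((Filter.eventually_gt_atTop r₀).and h1).exists
    exact ⟨R₀, h.1, h.2.le⟩
  set ε : ℝ := φ R₀ with hε_def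
  have hε_nonneg : 0 ≤ ε := hφ_nonneg R₀
  have hε1 : 2 ^ σ * ε ≤ 1 / 2 := by
    have h := le_trans hR₀small (min_le_left _ _)
    calc 2 ^ σ * ε ≤ 2 ^ σ * (1 / (2 * 2 ^ σ)) := by gcongr
      _ = 1 / 2 := by field_simp
  have hε2 : σ * 2 ^ (σ - 1) * ε ≤ 1 / 2 := by
    have h := le_trans hR₀small (min_le_right _ _)
    calc σ * 2 ^ (σ - 1) * ε ≤ σ * 2 ^ (σ - 1) * (1 / (2 * (σ * 2 ^ (σ - 1)))) := by gcongr
      _ = 1 / 2 := by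
        rw [mul_one_div, div_eq_div_iff (by positivity) (by norm_num)]
        ring
  have hsubR : Set.Ioi R₀ ⊆ Set.Ioi r₀ := Set.Ioi_subset_Ioi hR₀gt.le
  -- the space and the operator
  set SP : Set (BoundedContinuousFunction ℝ ℝ) := {u : BoundedContinuousFunction ℝ ℝ | ∀ x, u x ∈ Set.Icc (1/2 : ℝ) 2} with hSP_def
  set Pf : (BoundedContinuousFunction ℝ ℝ) → ℝ → ℝ :=
    fun u => (Set.Ioi R₀).indicator (fun t => B t * (gg t * u t) ^ σ) with hPf_def
  set Ff : (BoundedContinuousFunction ℝ ℝ) → ℝ → ℝ := fun u s => ∫ t in Set.Ioi s, Pf u t with hFf_def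
  set Qf : (BoundedContinuousFunction ℝ ℝ) → ℝ → ℝ :=
    fun u => (Set.Ioi R₀).indicator (fun s => (1 / A s) * Ff u s) with hQf_def
  set Gf : (BoundedContinuousFunction ℝ ℝ) → ℝ → ℝ := fun u r => ∫ s in Set.Ioi r, Qf u s with hGf_def
  have hu_half : ∀ u : BoundedContinuousFunction ℝ ℝ, u ∈ SP → ∀ t : ℝ, (0:ℝ) ≤ u t :=
    fun u hu t => le_trans (by norm_num) (hu t).1
  have hPf_contOn : ∀ u : BoundedContinuousFunction ℝ ℝ, ContinuousOn (fun t => B t * (gg t * u t) ^ σ) (Set.Ioi R₀) := by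
    intro u
    exact (hB_cont.mono hsubR).mul
      ((hgg_cont.continuousOn.mul u.continuous.continuousOn).rpow_const (fun x _ => Or.inr hσ0'))
  have hPf_bound : ∀ u : BoundedContinuousFunction ℝ ℝ, u ∈ SP → ∀ t, ‖Pf u t‖ ≤ 2 ^ σ * hfull t := by
    intro u hu t
    by_cases ht : t ∈ Set.Ioi R₀
    · have ht' : t ∈ Set.Ioi r₀ := hsubR ht
      have hggt := hgg_pos t ht'.le
      have h0 : (0:ℝ) ≤ gg t * u t := mul_nonneg hggt.le (hu_half u hu t)
      simp only [hPf_def]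
      rw [Set.indicator_of_mem ht, hhfull_def, Set.indicator_of_mem ht', Real.norm_eq_abs,
        abs_mul, abs_of_nonneg (Real.rpow_nonneg h0 σ), hgg_eq t ht'.le]
      have hle : (gg t * u t) ^ σ ≤ 2 ^ σ * gg t ^ σ := by
        have h1 : gg t * u t ≤ 2 * gg t := by nlinarith [(hu t).2, hggt.le]
        calc (gg t * u t) ^ σ ≤ (2 * gg t) ^ σ := Real.rpow_le_rpow h0 h1 hσ0'
          _ = 2 ^ σ * gg t ^ σ := Real.mul_rpow (by norm_num) hggt.le
      calc |B t| * (gg t * u t) ^ σ ≤ |B t| * (2 ^ σ * gg t ^ σ) :=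
            mul_le_mul_of_nonneg_left hle (abs_nonneg _)
        _ = 2 ^ σ * (gg t ^ σ * |B t|) := by ring
    · simp only [hPf_def]; rw [Set.indicator_of_notMem ht]
      simpa using mul_nonneg h2σpos.le (hhfull_nonneg t)
  have hPf_int : ∀ u : BoundedContinuousFunction ℝ ℝ, u ∈ SP → Integrable (Pf u) := by
    intro u hu
    have hmeas : AEStronglyMeasurable (Pf u) volume := by
      simp only [hPf_def]
      exact (aestronglyMeasurable_indicator_iff measurableSet_Ioi).2
        ((hPf_contOn u).aestronglyMeasurable measurableSet_Ioi)
    exact Integrable.mono' (hhfull_int.const_mul (2 ^ σ)) hmeas (ae_of_all _ (hPf_bound u hu))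
  have hFf_cont : ∀ u : BoundedContinuousFunction ℝ ℝ, u ∈ SP → Continuous (Ff u) := by
    intro u hu; simp only [hFf_def]; exact cont_int_Ioi (hPf_int u hu)
  have hFf_bound : ∀ u : BoundedContinuousFunction ℝ ℝ, u ∈ SP → ∀ s, |Ff u s| ≤ 2 ^ σ * φ s := by
    intro u hu s
    rw [← Real.norm_eq_abs, hFf_def]
    calc ‖∫ t in Set.Ioi s, Pf u t‖ ≤ ∫ t in Set.Ioi s, 2 ^ σ * hfull t :=
        norm_integral_le_of_norm_le ((hhfull_int.const_mul _).integrableOn)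
          (ae_of_all _ (fun t => hPf_bound u hu t))
      _ = 2 ^ σ * φ s := by rw [hφ_def, integral_const_mul]
  have hQf_int : ∀ u : BoundedContinuousFunction ℝ ℝ, u ∈ SP → Integrable (Qf u) := by
    intro u hu
    have hmeas : AEStronglyMeasurable (Qf u) volume := by
      simp only [hQf_def]
      exact (aestronglyMeasurable_indicator_iff measurableSet_Ioi).2
        (((hinvA_cont.mono hsubR).mul (hFf_cont u hu).continuousOn).aestronglyMeasurable
          measurableSet_Ioi)
    refine Integrable.mono' (hfA_int.const_mul (2 ^ σ * ε)) hmeas (ae_of_all _ ?_)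
    intro s
    by_cases hs : s ∈ Set.Ioi R₀
    · have hs' : s ∈ Set.Ioi r₀ := hsubR hs
      have hApos := hA_pos s hs'
      simp only [hQf_def]; rw [Set.indicator_of_mem hs, hfA_def, Set.indicator_of_mem hs',
        Real.norm_eq_abs, abs_mul, abs_of_nonneg (le_of_lt (div_pos one_pos hApos))]
      have h2 : |Ff u s| ≤ 2 ^ σ * ε := by
        refine le_trans (hFf_bound u hu s) ?_
        rw [hε_def]
        exact mul_le_mul_of_nonneg_left (hφ_anti hs.le) h2σpos.le
      calc (1 / A s) * |Ff u s| ≤ (1 / A s) * (2 ^ σ * ε) :=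
          mul_le_mul_of_nonneg_left h2 (le_of_lt (div_pos one_pos hApos))
        _ = 2 ^ σ * ε * (1 / A s) := by ring
    · simp only [hQf_def]; rw [Set.indicator_of_notMem hs, hfA_def]
      simp only [norm_zero]
      by_cases hs' : s ∈ Set.Ioi r₀
      · rw [Set.indicator_of_mem hs']
        exact mul_nonneg (mul_nonneg h2σpos.le hε_nonneg)
          (le_of_lt (div_pos one_pos (hA_pos s hs')))
      · rw [Set.indicator_of_notMem hs']; simp
  have hG_bound : ∀ u : BoundedContinuousFunction ℝ ℝ, u ∈ SP → ∀ ρ, R₀ ≤ ρ → |Gf u ρ| ≤ 2 ^ σ * φ ρ * gg ρ := by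
    intro u hu ρ hρ
    rw [← Real.norm_eq_abs, hGf_def]
    have hb : ∀ᵐ s ∂(volume.restrict (Set.Ioi ρ)), ‖Qf u s‖ ≤ 2 ^ σ * φ ρ * fA s := by
      rw [ae_restrict_iff' measurableSet_Ioi]
      refine ae_of_all _ ?_
      intro s hs
      have hsR : s ∈ Set.Ioi R₀ := lt_of_le_of_lt hρ hs
      have hs' : s ∈ Set.Ioi r₀ := hsubR hsR
      have hApos := hA_pos s hs'
      simp only [hQf_def]; rw [Set.indicator_of_mem hsR, hfA_def, Set.indicator_of_mem hs',
        Real.norm_eq_abs, abs_mul, abs_of_nonneg (le_of_lt (div_pos one_pos hApos))]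
      have h2 : |Ff u s| ≤ 2 ^ σ * φ ρ := by
        refine le_trans (hFf_bound u hu s) ?_
        exact mul_le_mul_of_nonneg_left (hφ_anti (le_of_lt hs)) h2σpos.le
      calc (1 / A s) * |Ff u s| ≤ (1 / A s) * (2 ^ σ * φ ρ) :=
          mul_le_mul_of_nonneg_left h2 (le_of_lt (div_pos one_pos hApos))
        _ = 2 ^ σ * φ ρ * (1 / A s) := by ring
    calc ‖∫ s in Set.Ioi ρ, Qf u s‖ ≤ ∫ s in Set.Ioi ρ, 2 ^ σ * φ ρ * fA s :=
        norm_integral_le_of_norm_le ((hfA_int.const_mul _).integrableOn) hb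
      _ = 2 ^ σ * φ ρ * gg ρ := by rw [hgg_def, integral_const_mul]
  have hPdiff : ∀ u v : BoundedContinuousFunction ℝ ℝ, u ∈ SP → v ∈ SP → ∀ t,
      ‖Pf u t - Pf v t‖ ≤ σ * 2 ^ (σ - 1) * dist u v * hfull t := by
    intro u v hu hv t
    by_cases ht : t ∈ Set.Ioi R₀
    · have ht' : t ∈ Set.Ioi r₀ := hsubR ht
      have hggt := hgg_pos t ht'.le
      simp only [hPf_def]
      simp only [Set.indicator_of_mem ht]
      rw [hhfull_def, Set.indicator_of_mem ht', hgg_eq t ht'.le, Real.norm_eq_abs]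
      have key : |B t * (gg t * u t) ^ σ - B t * (gg t * v t) ^ σ|
          = |B t| * |(gg t * u t) ^ σ - (gg t * v t) ^ σ| := by
        rw [← mul_sub, abs_mul]
      rw [key]
      have hmem1 : gg t * u t ∈ Set.Icc (0:ℝ) (2 * gg t) :=
        ⟨mul_nonneg hggt.le (hu_half u hu t), by nlinarith [(hu t).2]⟩
      have hmem2 : gg t * v t ∈ Set.Icc (0:ℝ) (2 * gg t) :=
        ⟨mul_nonneg hggt.le (hu_half v hv t), by nlinarith [(hv t).2]⟩
      have h1 := abs_rpow_sub_rpow_le hσ.le hmem1 hmem2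
      have h2 : |gg t * u t - gg t * v t| = gg t * |u t - v t| := by
        rw [← mul_sub, abs_mul, abs_of_nonneg hggt.le]
      have h3 : |u t - v t| ≤ dist u v := by
        rw [← Real.dist_eq]; exact BoundedContinuousFunction.dist_coe_le_dist t
      have h4 : (2 * gg t) ^ (σ - 1) = 2 ^ (σ - 1) * gg t ^ (σ - 1) :=
        Real.mul_rpow (by norm_num) hggt.le
      have h5 : gg t ^ (σ - 1) * gg t = gg t ^ σ := by
        rw [← Real.rpow_add_one hggt.ne' (σ - 1)]; norm_num
      have hrp : (0:ℝ) ≤ (2 * gg t) ^ (σ - 1) := Real.rpow_nonneg (by linarith) _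
      calc |B t| * |(gg t * u t) ^ σ - (gg t * v t) ^ σ|
          ≤ |B t| * (σ * (2 * gg t) ^ (σ - 1) * (gg t * |u t - v t|)) := by
            refine mul_le_mul_of_nonneg_left ?_ (abs_nonneg _)
            calc |(gg t * u t) ^ σ - (gg t * v t) ^ σ|
                ≤ σ * (2 * gg t) ^ (σ - 1) * |gg t * u t - gg t * v t| := h1
              _ = σ * (2 * gg t) ^ (σ - 1) * (gg t * |u t - v t|) := by rw [h2]
        _ ≤ |B t| * (σ * (2 * gg t) ^ (σ - 1) * (gg t * dist u v)) := by
            refine mul_le_mul_of_nonneg_left ?_ (abs_nonneg _)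
            refine mul_le_mul_of_nonneg_left ?_ (mul_nonneg hσ0' hrp)
            exact mul_le_mul_of_nonneg_left h3 hggt.le
        _ = σ * 2 ^ (σ - 1) * dist u v * ((gg t ^ (σ - 1) * gg t) * |B t|) := by
            rw [h4]; ring
        _ = σ * 2 ^ (σ - 1) * dist u v * (gg t ^ σ * |B t|) := by rw [h5]
    · simp only [hPf_def]
      simp only [Set.indicator_of_notMem ht, sub_zero, norm_zero]
      exact mul_nonneg (mul_nonneg (mul_nonneg hσ0' h2σ1pos.le) dist_nonneg) (hhfull_nonneg t)
  have hFdiff : ∀ u v : BoundedContinuousFunction ℝ ℝ, u ∈ SP → v ∈ SP → ∀ s,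
      |Ff u s - Ff v s| ≤ σ * 2 ^ (σ - 1) * dist u v * φ s := by
    intro u v hu hv s
    simp only [hFf_def]
    rw [← integral_sub (hPf_int u hu).integrableOn (hPf_int v hv).integrableOn,
      ← Real.norm_eq_abs]
    calc ‖∫ t in Set.Ioi s, (Pf u t - Pf v t)‖
        ≤ ∫ t in Set.Ioi s, σ * 2 ^ (σ - 1) * dist u v * hfull t :=
        norm_integral_le_of_norm_le ((hhfull_int.const_mul _).integrableOn)
          (ae_of_all _ (fun t => hPdiff u v hu hv t))
      _ = σ * 2 ^ (σ - 1) * dist u v * φ s := by rw [hφ_def, integral_const_mul]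
  have hGdiff : ∀ u v : BoundedContinuousFunction ℝ ℝ, u ∈ SP → v ∈ SP → ∀ ρ, R₀ ≤ ρ →
      |Gf u ρ - Gf v ρ| ≤ σ * 2 ^ (σ - 1) * dist u v * ε * gg ρ := by
    intro u v hu hv ρ hρ
    simp only [hGf_def]
    rw [← integral_sub (hQf_int u hu).integrableOn (hQf_int v hv).integrableOn,
      ← Real.norm_eq_abs]
    have hb : ∀ᵐ s ∂(volume.restrict (Set.Ioi ρ)),
        ‖Qf u s - Qf v s‖ ≤ σ * 2 ^ (σ - 1) * dist u v * ε * fA s := by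
      rw [ae_restrict_iff' measurableSet_Ioi]
      refine ae_of_all _ ?_
      intro s hs
      have hsR : s ∈ Set.Ioi R₀ := lt_of_le_of_lt hρ hs
      have hs' : s ∈ Set.Ioi r₀ := hsubR hsR
      have hApos := hA_pos s hs'
      simp only [hQf_def]
      simp only [Set.indicator_of_mem hsR]
      rw [hfA_def, Set.indicator_of_mem hs', ← mul_sub, Real.norm_eq_abs, abs_mul,
        abs_of_nonneg (le_of_lt (div_pos one_pos hApos))]
      have h2 : |Ff u s - Ff v s| ≤ σ * 2 ^ (σ - 1) * dist u v * ε := by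
        refine le_trans (hFdiff u v hu hv s) ?_
        rw [hε_def]
        refine mul_le_mul_of_nonneg_left (hφ_anti (le_trans hρ (le_of_lt hs))) ?_
        exact mul_nonneg (mul_nonneg hσ0' h2σ1pos.le) dist_nonneg
      calc (1 / A s) * |Ff u s - Ff v s| ≤ (1 / A s) * (σ * 2 ^ (σ - 1) * dist u v * ε) :=
          mul_le_mul_of_nonneg_left h2 (le_of_lt (div_pos one_pos hApos))
        _ = σ * 2 ^ (σ - 1) * dist u v * ε * (1 / A s) := by ring
    calc ‖∫ s in Set.Ioi ρ, (Qf u s - Qf v s)‖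
        ≤ ∫ s in Set.Ioi ρ, σ * 2 ^ (σ - 1) * dist u v * ε * fA s :=
        norm_integral_le_of_norm_le ((hfA_int.const_mul _).integrableOn) hb
      _ = σ * 2 ^ (σ - 1) * dist u v * ε * gg ρ := by rw [hgg_def, integral_const_mul]
  -- the operator T
  have hmax_mem : ∀ r : ℝ, r₀ < max r R₀ := fun r => lt_of_lt_of_le hR₀gt (le_max_right r R₀)
  set Tfun : (BoundedContinuousFunction ℝ ℝ) → ℝ → ℝ :=
    fun u r => 1 - Gf u (max r R₀) / gg (max r R₀) with hTfun_def
  clear_value Tfun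
  clear_value Gf
  have hT_cont : ∀ u : BoundedContinuousFunction ℝ ℝ, u ∈ SP → Continuous (Tfun u) := by
    intro u hu
    have hmax : Continuous fun r : ℝ => max r R₀ := continuous_id.max continuous_const
    have hGcont : Continuous (Gf u) := by simp only [hGf_def]; exact cont_int_Ioi (hQf_int u hu)
    simp only [hTfun_def]
    exact continuous_const.sub ((hGcont.comp hmax).div (hgg_cont.comp hmax)
      (fun r => hgg_ne _ (hmax_mem r).le))
  have hT_dist1 : ∀ u : BoundedContinuousFunction ℝ ℝ, u ∈ SP → ∀ r, |Tfun u r - 1| ≤ 2 ^ σ * φ (max r R₀) := by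
    intro u hu r
    have h1 := hG_bound u hu (max r R₀) (le_max_right _ _)
    have hggm := hgg_pos _ (hmax_mem r).le
    simp only [hTfun_def]
    rw [show (1 : ℝ) - Gf u (max r R₀) / gg (max r R₀) - 1
        = -(Gf u (max r R₀) / gg (max r R₀)) by ring, abs_neg, abs_div,
      abs_of_pos hggm, div_le_iff₀ hggm]
    exact h1
  have hT_close : ∀ u : BoundedContinuousFunction ℝ ℝ, u ∈ SP → ∀ r, |Tfun u r - 1| ≤ 1 / 2 := by
    intro u hu r
    refine le_trans (hT_dist1 u hu r) (le_trans ?_ hε1)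
    rw [hε_def]
    exact mul_le_mul_of_nonneg_left (hφ_anti (le_max_right _ _)) h2σpos.le
  have hT_mem : ∀ u : BoundedContinuousFunction ℝ ℝ, u ∈ SP → ∀ r, Tfun u r ∈ Set.Icc (1/2 : ℝ) 2 := by
    intro u hu r
    have h := abs_le.1 (hT_close u hu r)
    exact Set.mem_Icc.mpr ⟨by nlinarith [h.1, h.2], by nlinarith [h.1, h.2]⟩
  have hT_bdd : ∀ u : BoundedContinuousFunction ℝ ℝ, (hu : u ∈ SP) → ∀ r, ‖Tfun u r‖ ≤ 2 := by
    intro u hu r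
    have h := Set.mem_Icc.mp (hT_mem u hu r)
    rw [Real.norm_eq_abs, abs_le]
    exact ⟨by nlinarith [h.1, h.2], by nlinarith [h.1, h.2]⟩
  set Tmap : SP → SP := fun u =>
    ⟨BoundedContinuousFunction.ofNormedAddCommGroup (Tfun u) (hT_cont u u.2) 2 (hT_bdd u u.2),
      fun x => by
        simpa [BoundedContinuousFunction.coe_ofNormedAddCommGroup] using hT_mem u u.2 x⟩
    with hTmap_def
  clear_value Tmap
  have hSP_closed : IsClosed SP := by
    have hEq : SP = ⋂ x : ℝ, (fun u : BoundedContinuousFunction ℝ ℝ => u x) ⁻¹' Set.Icc (1/2 : ℝ) 2 := by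
      ext u; simp [hSP_def, Set.mem_iInter]
    rw [hEq]
    exact isClosed_iInter fun x =>
      isClosed_Icc.preimage ((BoundedContinuousFunction.lipschitz_eval_const x).continuous)
  haveI : CompleteSpace SP := hSP_closed.completeSpace_coe
  haveI : Nonempty SP := ⟨⟨BoundedContinuousFunction.const ℝ (1:ℝ), fun x => by
    simp only [BoundedContinuousFunction.const_apply]
    constructor <;> norm_num⟩⟩
  have hTlip : ∀ u v : SP, dist (Tmap u) (Tmap v) ≤ (1/2 : ℝ) * dist u v := by
    intro u v
    rw [Subtype.dist_eq, hTmap_def]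
    refine (BoundedContinuousFunction.dist_le (by positivity)).2 ?_
    intro r
    simp only [BoundedContinuousFunction.coe_ofNormedAddCommGroup]
    have hggm := hgg_pos _ (hmax_mem r).le
    rw [Real.dist_eq, hTfun_def]
    rw [show (1 : ℝ) - Gf (↑u) (max r R₀) / gg (max r R₀)
        - (1 - Gf (↑v) (max r R₀) / gg (max r R₀))
        = (Gf (↑v) (max r R₀) - Gf (↑u) (max r R₀)) / gg (max r R₀) by ring, abs_div,
      abs_of_pos hggm, div_le_iff₀ hggm, abs_sub_comm]
    have h2 := hGdiff (↑u) (↑v) u.2 v.2 (max r R₀) (le_max_right _ _)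
    refine h2.trans ?_
    have hdnn : (0:ℝ) ≤ dist (↑u : BoundedContinuousFunction ℝ ℝ) ↑v := dist_nonneg
    calc σ * 2 ^ (σ - 1) * dist (↑u : BoundedContinuousFunction ℝ ℝ) ↑v * ε * gg (max r R₀)
        = (σ * 2 ^ (σ - 1) * ε) * (dist (↑u : BoundedContinuousFunction ℝ ℝ) ↑v * gg (max r R₀)) := by ring
      _ ≤ (1/2) * (dist (↑u : BoundedContinuousFunction ℝ ℝ) ↑v * gg (max r R₀)) :=
          mul_le_mul_of_nonneg_right hε2 (mul_nonneg hdnn hggm.le)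
      _ = 1/2 * dist (↑u : BoundedContinuousFunction ℝ ℝ) ↑v * gg (max r R₀) := by ring
      _ = 1/2 * dist u v * gg (max r R₀) := by rw [Subtype.dist_eq]
  have hcontr : ContractingWith (1/2 : NNReal) Tmap := by
    constructor
    · rw [← NNReal.coe_lt_coe]; norm_num
    · refine LipschitzWith.of_dist_le_mul fun u v => ?_
      have h := hTlip u v
      have hc : ((1/2 : NNReal) : ℝ) = 1/2 := by norm_num
      rw [hc]
      exact h
  obtain ⟨⟨u, hu⟩, hfix⟩ : ∃ w : SP, Tmap w = w :=
    ⟨ContractingWith.fixedPoint Tmap hcontr, hcontr.fixedPoint_isFixedPt⟩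
  have hfix_eq : ∀ r, u r = Tfun u r := by
    intro r
    have h := congrArg (fun w : SP => (w : BoundedContinuousFunction ℝ ℝ) r) hfix
    simp only [hTmap_def] at h
    simpa [BoundedContinuousFunction.coe_ofNormedAddCommGroup] using h.symm
  have hfix_eq' : ∀ r, R₀ < r → u r = 1 - Gf u r / gg r := by
    intro r hr
    have h := hfix_eq r
    simp only [hTfun_def] at h
    simpa [max_eq_left hr.le] using h
  have hkey : ∀ r, R₀ < r → gg r * u r = gg r - Gf u r := by
    intro r hr
    have hne := hgg_ne r (lt_trans hR₀gt hr).le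
    rw [hfix_eq' r hr, mul_sub, mul_one, ← mul_div_assoc, mul_div_cancel_left₀ _ hne]
  -- assemble the solution
  refine ⟨R₀, hR₀gt, (fun r => gg r * u r), (fun r => (Ff u r - 1) / A r),
    (fun r => -(B r * (gg r * u r) ^ σ)), ?_, ?_, ?_, ?_, ?_⟩
  · -- positivity
    intro r hr
    exact mul_pos (hgg_pos r (lt_trans hR₀gt hr).le)
      (lt_of_lt_of_le (by norm_num) (hu r).1)
  · -- first derivative
    intro r hr
    have hr' : r₀ < r := lt_trans hR₀gt hr
    have hQcontAt : ContinuousAt (Qf u) r := by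
      have hceq : Qf u =ᶠ[nhds r] fun s => (1 / A s) * Ff u s := by
        filter_upwards [Ioi_mem_nhds hr] with x hx
        simp only [hQf_def]; exact Set.indicator_of_mem hx _
      have hc2 : ContinuousAt (fun s => (1 / A s) * Ff u s) r :=
        (hinvA_cont.continuousAt (Ioi_mem_nhds hr')).mul (hFf_cont u hu).continuousAt
      exact hc2.congr hceq.symm
    have hderG : HasDerivAt (Gf u) (-(Qf u r)) r := by
      simp only [hGf_def]; exact hasDerivAt_int_Ioi (hQf_int u hu) hQcontAt
    have hder := (hgg_deriv r hr').sub hderG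
    have heq : (fun x => gg x * u x) =ᶠ[nhds r] fun x => gg x - Gf u x := by
      filter_upwards [Ioi_mem_nhds hr] with x hx
      exact hkey x hx
    have hfinal := hder.congr_of_eventuallyEq heq
    have hQr : Qf u r = (1 / A r) * Ff u r := by
      simp only [hQf_def]; exact Set.indicator_of_mem hr _
    have hAne := (hA_pos r hr').ne'
    have hval : -(1 / A r) - -(Qf u r) = (Ff u r - 1) / A r := by
      rw [hQr]; field_simp; ring
    show HasDerivAt (fun x => gg x * u x) ((Ff u r - 1) / A r) r
    rw [← hval]
    exact hfinal
  · -- second derivative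
    intro r hr
    have hr' : r₀ < r := lt_trans hR₀gt hr
    have hPcontAt : ContinuousAt (Pf u) r := by
      have hceq : Pf u =ᶠ[nhds r] fun t => B t * (gg t * u t) ^ σ := by
        filter_upwards [Ioi_mem_nhds hr] with x hx
        simp only [hPf_def]; exact Set.indicator_of_mem hx _
      have hc2 : ContinuousAt (fun t => B t * (gg t * u t) ^ σ) r :=
        (hB_cont.continuousAt (Ioi_mem_nhds hr')).mul
          ((hgg_cont.continuousAt.mul u.continuous.continuousAt).rpow_const (Or.inr hσ0'))
      exact hc2.congr hceq.symm
    have hderF : HasDerivAt (Ff u) (-(Pf u r)) r := by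
      simp only [hFf_def]; exact hasDerivAt_int_Ioi (hPf_int u hu) hPcontAt
    have hder2 : HasDerivAt (fun s => Ff u s - 1) (-(Pf u r)) r := hderF.sub_const 1
    have heq : (fun s => A s * ((Ff u s - 1) / A s)) =ᶠ[nhds r] fun s => Ff u s - 1 := by
      filter_upwards [Ioi_mem_nhds hr'] with x hx
      rw [mul_comm, div_mul_cancel₀ _ (hA_pos x hx).ne']
    have hfinal := hder2.congr_of_eventuallyEq heq
    have hPr : Pf u r = B r * (gg r * u r) ^ σ := by
      simp only [hPf_def]; exact Set.indicator_of_mem hr _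
    show HasDerivAt (fun s => A s * ((Ff u s - 1) / A s)) (-(B r * (gg r * u r) ^ σ)) r
    rw [show -(B r * (gg r * u r) ^ σ) = -(Pf u r) by rw [hPr]]
    exact hfinal
  · -- the equation
    intro r hr
    ring
  · -- asymptotics
    have hc : Filter.Tendsto (fun r => 2 ^ σ * φ r) Filter.atTop (nhds 0) := by
      simpa using hφ_tendsto.const_mul (2 ^ σ : ℝ)
    have hlim1 : Filter.Tendsto (fun r => 1 - 2 ^ σ * φ r) Filter.atTop (nhds 1) := by
      simpa using (tendsto_const_nhds (x := (1:ℝ))).sub hc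
    have hlim2 : Filter.Tendsto (fun r => 1 + 2 ^ σ * φ r) Filter.atTop (nhds 1) := by
      simpa using (tendsto_const_nhds (x := (1:ℝ))).add hc
    have hbnd : ∀ r, R₀ < r → |gg r * u r / γ r - 1| ≤ 2 ^ σ * φ r := by
      intro r hr
      have hr' : r₀ < r := lt_trans hR₀gt hr
      have hggr := hgg_pos r hr'.le
      have h1 : gg r * u r / γ r = u r := by
        rw [hgg_eq r hr'.le, mul_comm, mul_div_assoc, div_self (hgg_ne r hr'.le), mul_one]
      rw [h1]
      have h2 := hfix_eq' r hr
      rw [h2, show (1:ℝ) - Gf u r / gg r - 1 = -(Gf u r / gg r) by ring, abs_neg, abs_div,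
        abs_of_pos hggr, div_le_iff₀ hggr]
      exact hG_bound u hu r hr.le
    refine tendsto_of_tendsto_of_tendsto_of_le_of_le' hlim1 hlim2 ?_ ?_
    · filter_upwards [Filter.eventually_gt_atTop R₀] with r hr
      have h := abs_le.1 (hbnd r hr)
      linarith [h.1]
    · filter_upwards [Filter.eventually_gt_atTop R₀] with r hr
      have h := abs_le.1 (hbnd r hr)
      linarith [h.2]
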